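/- (Existence and uniqueness of the support of a state.) Let m be a probability measure on L such that whenever m(a) = m(b) = 0 for a, b ∈ L, there exists c ∈ L with a ≤ c, b ≤ c, and m(c) = 0. Then there is a unique element s ∈ L such that for every x ∈ L, m(x) = 1 if and only if s ≤ x. -/
import Mathlib


/-- A separable, countably orthocomplete, orthomodular orthocomplemented poset:
a bounded partial order with an orthocomplementation `compl` in which every
sequence of pairwise-orthogonal elements has a least upper bound, the
orthomodular law holds, and every pairwise-orthogonal set of nonzero elements
is countable. -/
structure OrthomodularPoset (L : Type*) [PartialOrder L] [BoundedOrder L] where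
  compl : L → L
  compl_compl : ∀ a : L, compl (compl a) = a
  compl_antitone : ∀ a b : L, a ≤ b → compl b ≤ compl a
  lub_compl : ∀ a : L, IsLUB {a, compl a} ⊤
  glb_compl : ∀ a : L, IsGLB {a, compl a} ⊥
  ortho_sup : ∀ f : ℕ → L, (∀ i j : ℕ, i ≠ j → f i ≤ compl (f j)) →
    ∃ s : L, IsLUB (Set.range f) s
  orthomodular : ∀ a b : L, a ≤ b →
    ∃ c : L, IsGLB {b, compl a} c ∧ IsLUB {a, c} b
  separable : ∀ S : Set L, (∀ a ∈ S, a ≠ ⊥) →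
    (∀ a ∈ S, ∀ b ∈ S, a ≠ b → a ≤ compl b) → S.Countable

/-- A probability measure on an orthomodular poset: a `[0,1]`-valued function
with `m(0) = 0`, `m(1) = 1`, that is countably additive on pairwise-orthogonal
sequences (whenever the least upper bound exists). -/
def IsProbMeasure {L : Type*} [PartialOrder L] [BoundedOrder L]
    (P : OrthomodularPoset L) (m : L → ℝ) : Prop :=
  (∀ a : L, 0 ≤ m a ∧ m a ≤ 1) ∧ m ⊥ = 0 ∧ m ⊤ = 1 ∧
    ∀ f : ℕ → L, (∀ i j : ℕ, i ≠ j → f i ≤ P.compl (f j)) →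
      ∀ s : L, IsLUB (Set.range f) s → HasSum (fun i => m (f i)) (m s)

/-- `s` is the support of the state `m`: `m(x) = 1` exactly when `s ≤ x`. -/
def IsSupport {L : Type*} [PartialOrder L] [BoundedOrder L] (m : L → ℝ) (s : L) : Prop :=
  ∀ x : L, m x = 1 ↔ s ≤ x

section Aux

variable {L : Type*} [PartialOrder L] [BoundedOrder L] (P : OrthomodularPoset L)

lemma OMP.compl_bot : P.compl ⊥ = ⊤ := by
  have h : (⊤ : L) ≤ P.compl ⊥ := by
    apply (P.lub_compl ⊥).2
    rintro x (rfl | hx)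
    · exact bot_le
    · rcases hx with rfl; exact le_rfl
  exact le_antisymm le_top h

lemma OMP.orth_symm {a b : L} (h : a ≤ P.compl b) : b ≤ P.compl a := by
  have h2 := P.compl_antitone _ _ h
  rwa [P.compl_compl] at h2

lemma OMP.pair_sum (m : L → ℝ) (hm : IsProbMeasure P m) {a b s : L}
    (hab : a ≤ P.compl b) (hs : IsLUB {a, b} s) : m s = m a + m b := by
  obtain ⟨hbd, hbot, htop, hadd⟩ := hm
  have hba : b ≤ P.compl a := OMP.orth_symm P hab
  set f : ℕ → L := fun n => if n = 0 then a else if n = 1 then b else ⊥ with hf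
  have hfval : ∀ n : ℕ, (n = 0 ∧ f n = a) ∨ (n = 1 ∧ f n = b) ∨ f n = ⊥ := by
    intro n
    by_cases h0 : n = 0
    · exact Or.inl ⟨h0, by simp [hf, h0]⟩
    · by_cases h1 : n = 1
      · exact Or.inr (Or.inl ⟨h1, by simp [hf, h0, h1]⟩)
      · exact Or.inr (Or.inr (by simp [hf, h0, h1]))
  have horth : ∀ i j : ℕ, i ≠ j → f i ≤ P.compl (f j) := by
    intro i j hij
    rcases hfval i with ⟨hi, hfi⟩ | ⟨hi, hfi⟩ | hfi <;>
      rcases hfval j with ⟨hj, hfj⟩ | ⟨hj, hfj⟩ | hfj <;>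
      rw [hfi, hfj] <;>
      first
        | exact absurd (hi.trans hj.symm) hij
        | exact hab
        | exact hba
        | (rw [OMP.compl_bot P]; exact le_top)
        | exact bot_le
  have hlub : IsLUB (Set.range f) s := by
    constructor
    · rintro x ⟨n, rfl⟩
      by_cases hn0 : n = 0
      · simpa [hf, hn0] using hs.1 (show a ∈ ({a, b} : Set L) by simp)
      · by_cases hn1 : n = 1
        · simpa [hf, hn0, hn1] using hs.1 (show b ∈ ({a, b} : Set L) by simp)
        · simp [hf, hn0, hn1]
    · intro u hu
      apply hs.2
      rintro x (rfl | hx)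
      · simpa [hf] using hu ⟨0, rfl⟩
      · rcases hx with rfl
        simpa [hf] using hu ⟨1, rfl⟩
  have h1 := hadd f horth s hlub
  have h2 : HasSum (fun i => m (f i)) (∑ i ∈ ({0, 1} : Finset ℕ), m (f i)) := by
    apply hasSum_sum_of_ne_finset_zero
    intro n hn
    simp only [Finset.mem_insert, Finset.mem_singleton, not_or] at hn
    simp [hf, hn.1, hn.2, hbot]
  have h3 : (∑ i ∈ ({0, 1} : Finset ℕ), m (f i)) = m a + m b := by
    norm_num [hf]
  rw [h3] at h2
  exact h1.unique h2

lemma OMP.mono (m : L → ℝ) (hm : IsProbMeasure P m) {a b : L} (h : a ≤ b) :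
    m a ≤ m b := by
  obtain ⟨c, hc1, hc2⟩ := P.orthomodular a b h
  have hca : c ≤ P.compl a := hc1.1 (by simp)
  have hac : a ≤ P.compl c := OMP.orth_symm P hca
  have hsum := OMP.pair_sum P m hm hac hc2
  have := (hm.1 c).1
  linarith

lemma OMP.add_compl (m : L → ℝ) (hm : IsProbMeasure P m) (a : L) :
    m a + m (P.compl a) = 1 := by
  have hab : a ≤ P.compl (P.compl a) := by rw [P.compl_compl]
  have h := OMP.pair_sum P m hm hab (P.lub_compl a)
  rw [hm.2.2.1] at h
  linarith

end Aux

/-- **Existence and uniqueness of the support of a state**: a probability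
measure `m` such that any two null elements lie below a common null element has
a unique support. -/
theorem exists_unique_support {L : Type*} [PartialOrder L] [BoundedOrder L]
    (P : OrthomodularPoset L) (m : L → ℝ) (hm : IsProbMeasure P m)
    (hjoin : ∀ a b : L, m a = 0 → m b = 0 → ∃ c : L, a ≤ c ∧ b ≤ c ∧ m c = 0) :
    ∃! s : L, ∀ x : L, m x = 1 ↔ s ≤ x := by
  classical
  -- the family of pairwise-orthogonal sets of nonzero null elements
  set 𝒮 : Set (Set L) :=
    {S | (∀ a ∈ S, m a = 0 ∧ a ≠ ⊥) ∧
      ∀ a ∈ S, ∀ b ∈ S, a ≠ b → a ≤ P.compl b} with h𝒮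
  obtain ⟨S, hSmax⟩ : ∃ S, Maximal (· ∈ 𝒮) S := by
    apply zorn_subset
    intro c hc hchain
    refine ⟨⋃₀ c, ⟨?_, ?_⟩, fun s hs => Set.subset_sUnion_of_mem hs⟩
    · rintro a ⟨t, htc, hat⟩
      exact (hc htc).1 a hat
    · rintro a ⟨t, htc, hat⟩ b ⟨u, huc, hbu⟩ hab
      rcases hchain.total htc huc with h | h
      · exact (hc huc).2 a (h hat) b hbu hab
      · exact (hc htc).2 a hat b (h hbu) hab
  have hS := hSmax.1
  have hScount : S.Countable :=
    P.separable S (fun a ha => (hS.1 a ha).2) hS.2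
  -- enumerate S (padded with ⊥) by a pairwise-orthogonal sequence
  obtain ⟨f, hfS, hfmem, hforth⟩ :
      ∃ f : ℕ → L, S ⊆ Set.range f ∧ (∀ n, f n ∈ S ∨ f n = ⊥) ∧
        ∀ i j : ℕ, i ≠ j → f i ≤ P.compl (f j) := by
    rcases S.eq_empty_or_nonempty with rfl | hne
    · exact ⟨fun _ => ⊥, by simp, fun _ => Or.inr rfl, fun i j _ => bot_le⟩
    · obtain ⟨g, hg⟩ := hScount.exists_eq_range hne
      refine ⟨fun n => if ∀ k < n, g k ≠ g n then g n else ⊥, ?_, ?_, ?_⟩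
      · intro x hx
        have hx' : ∃ n, g n = x := by
          rw [hg] at hx; exact hx
        refine ⟨Nat.find hx', ?_⟩
        have hfind := Nat.find_spec hx'
        have hmin : ∀ k < Nat.find hx', g k ≠ g (Nat.find hx') := by
          intro k hk
          rw [hfind]
          exact Nat.find_min hx' hk
        simp only [if_pos hmin]
        exact hfind
      · intro n
        by_cases h : ∀ k < n, g k ≠ g n
        · simp only [if_pos h]
          left; rw [hg]; exact ⟨n, rfl⟩
        · exact Or.inr (by simp only [if_neg h])
      · intro i j hij
        by_cases hi : ∀ k < i, g k ≠ g i
        · by_cases hj : ∀ k < j, g k ≠ g j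
          · simp only [if_pos hi, if_pos hj]
            have hgi : g i ∈ S := by rw [hg]; exact ⟨i, rfl⟩
            have hgj : g j ∈ S := by rw [hg]; exact ⟨j, rfl⟩
            have hne2 : g i ≠ g j := by
              rcases lt_or_gt_of_ne hij with h | h
              · exact fun he => hj i h he
              · exact fun he => hi j h he.symm
            exact hS.2 _ hgi _ hgj hne2
          · simp only [if_neg hj, OMP.compl_bot P]
            exact le_top
        · simp only [if_neg hi]
          exact bot_le
  obtain ⟨n, hn⟩ := P.ortho_sup f hforth
  -- m n = 0
  have hmn : m n = 0 := by
    have h1 := hm.2.2.2 f hforth n hn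
    have h0 : (fun i => m (f i)) = fun _ => (0 : ℝ) := by
      funext i
      rcases hfmem i with h | h
      · exact (hS.1 _ h).1
      · rw [h, hm.2.1]
    rw [h0] at h1
    exact h1.unique hasSum_zero
  -- every element of S is below n
  have hSn : ∀ x ∈ S, x ≤ n := fun x hx => hn.1 (hfS hx)
  -- n is the greatest null element
  have hmax : ∀ a : L, m a = 0 → a ≤ n := by
    intro a ha
    obtain ⟨c, hnc, hac, hc0⟩ := hjoin n a hmn ha
    obtain ⟨d, hd1, hd2⟩ := P.orthomodular n c hnc
    have hdn : d ≤ P.compl n := hd1.1 (by simp)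
    have hnd : n ≤ P.compl d := OMP.orth_symm P hdn
    have hmd : m d = 0 := by
      have hsum := OMP.pair_sum P m hm hnd hd2
      linarith [hsum, hc0, hmn]
    have hdbot : d = ⊥ := by
      by_contra hne
      have hdS : d ∉ S := by
        intro hdS
        have h1 : d ≤ n := hSn d hdS
        have h2 : d ≤ ⊥ := (P.glb_compl n).2 (by
          rintro x (rfl | hx)
          · exact h1
          · rcases hx with rfl; exact hdn)
        exact hne (le_antisymm h2 bot_le)
      have hbig : insert d S ∈ 𝒮 := by
        constructor
        · rintro a (rfl | haS)
          · exact ⟨hmd, hne⟩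
          · exact hS.1 a haS
        · rintro a (rfl | haS) b (rfl | hbS) hab
          · exact absurd rfl hab
          · -- a = d, b ∈ S : d ≤ compl b since d ≤ compl n ≤ compl b
            exact le_trans hdn (P.compl_antitone _ _ (hSn b hbS))
          · -- a ∈ S, b = d
            exact OMP.orth_symm P (le_trans hdn (P.compl_antitone _ _ (hSn a haS)))
          · exact hS.2 a haS b hbS hab
      have := hSmax.2 hbig (Set.subset_insert d S)
      exact hdS (this (Set.mem_insert d S))
    have hcn : c ≤ n := by
      apply hd2.2
      rintro x (rfl | hx)
      · exact le_rfl
      · rcases hx with rfl; rw [hdbot]; exact bot_le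
    exact le_trans hac hcn
  -- the support is compl n
  have hsupp : ∀ x : L, m x = 1 ↔ P.compl n ≤ x := by
    intro x
    constructor
    · intro hx1
      have hcx : m (P.compl x) = 0 := by
        have := OMP.add_compl P m hm x
        linarith
      have := hmax _ hcx
      have h2 := P.compl_antitone _ _ this
      rwa [P.compl_compl] at h2
    · intro hle
      have h1 : P.compl x ≤ n := by
        have h2 := P.compl_antitone _ _ hle
        rwa [P.compl_compl] at h2
      have h3 : m (P.compl x) ≤ 0 := hmn ▸ OMP.mono P m hm h1
      have h4 : 0 ≤ m (P.compl x) := (hm.1 _).1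
      have h5 : m (P.compl x) = 0 := le_antisymm h3 h4
      have := OMP.add_compl P m hm x
      linarith
  have hcn1 : m (P.compl n) = 1 := by
    have := OMP.add_compl P m hm n
    linarith
  refine ⟨P.compl n, hsupp, fun t ht => ?_⟩
  exact le_antisymm ((ht _).mp hcn1) ((hsupp t).mp ((ht t).mpr le_rfl))
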